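/- arXiv:2201.01866 — 4 statements merged into one kernel-verified Lean document; each statement's English description precedes it below -/
import Mathlib

section
/- If φ is a finite linear combination φ(x,t) = Σ_{n∈S} c_n (exp(nπi(1-v)(t+x)/L) − exp(nπi(1+v)(t-x)/L)) over a finite set S of nonzero integers with complex coefficients c_n, then for every t ≥ 0 the quantity (1/2)∫_{vt}^{L+vt} ((∂ₜφ + v∂ₓφ)² + (1-v²)(∂ₓφ)²) dx equals (2π²(1-v²)/L)·Σ_{n∈S} |n c_n|², where the integrand square means the squared modulus; in particular this energy is independent of t. -/
open MeasureTheory Complex Real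

private lemma hasDerivAt_cexp_lin (a b : ℂ) (t : ℝ) :
    HasDerivAt (fun s : ℝ => Complex.exp (a * s + b)) (a * Complex.exp (a * t + b)) t := by
  have h : HasDerivAt (fun s : ℝ => a * (s : ℂ) + b) a t := by
    simpa using (Complex.ofRealCLM.hasDerivAt.const_mul a).add_const b
  simpa [mul_comm] using h.cexp

private lemma hasDerivAt_cexp_comp (a b : ℂ) (f : ℝ → ℂ) (hf : ∀ s : ℝ, f s = a * s + b)
    (t : ℝ) : HasDerivAt (fun s : ℝ => Complex.exp (f s)) (a * Complex.exp (f t)) t := by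
  have h : (fun s : ℝ => Complex.exp (f s)) = fun s : ℝ => Complex.exp (a * s + b) := by
    funext s; rw [hf s]
  rw [h, hf t]; exact hasDerivAt_cexp_lin a b t

private lemma conj_exp_ofReal_mul_I (θ : ℝ) :
    (starRingEnd ℂ) (Complex.exp ((θ : ℂ) * I)) = Complex.exp (-((θ : ℂ) * I)) := by
  rw [← Complex.exp_conj]
  congr 1
  simp [Complex.conj_I]

private lemma exp_eq_exp_of_eq_add_int (θ₁ θ₂ : ℝ) (k : ℤ) (h : θ₁ = θ₂ + 2 * k * π) :
    Complex.exp ((θ₁ : ℂ) * I) = Complex.exp ((θ₂ : ℂ) * I) := by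
  have h2 : (θ₁ : ℂ) * I = (θ₂ : ℂ) * I + (k : ℂ) * (2 * (π : ℂ) * I) := by
    rw [h]; push_cast; ring
  rw [h2, Complex.exp_add, Complex.exp_int_mul_two_pi_mul_I, mul_one]

theorem stmt5 (L v : ℝ) (hL : 0 < L) (hv0 : 0 < v) (hv1 : v < 1)
    (S : Finset ℤ) (hS : ∀ n ∈ S, n ≠ 0) (c : ℤ → ℂ) (φ : ℝ → ℝ → ℂ)
    (hφ : ∀ x t : ℝ, φ x t = ∑ n ∈ S, c n * (Complex.exp ((n : ℂ) * (Real.pi : ℂ) * Complex.I * ((1 : ℂ) - (v : ℂ)) * ((t : ℂ) + (x : ℂ)) / (L : ℂ)) - Complex.exp ((n : ℂ) * (Real.pi : ℂ) * Complex.I * ((1 : ℂ) + (v : ℂ)) * ((t : ℂ) - (x : ℂ)) / (L : ℂ)))) :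
    ∀ t : ℝ, 0 ≤ t →
      (1 / 2) * ∫ x in (v * t)..(L + v * t),
          (‖deriv (fun s => φ x s) t + (v : ℂ) * deriv (fun y => φ y t) x‖ ^ 2
            + (1 - v ^ 2) * ‖deriv (fun y => φ y t) x‖ ^ 2)
        = (2 * Real.pi ^ 2 * (1 - v ^ 2) / L) * ∑ n ∈ S, ‖(n : ℂ) * c n‖ ^ 2 := by
  intro t _ht
  have hL0 : (L : ℝ) ≠ 0 := hL.ne'
  have hLC : (L : ℂ) ≠ 0 := by exact_mod_cast hL0
  set a : ℤ → ℝ := fun n => n * π * (1 - v) / L with ha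
  set b : ℤ → ℝ := fun n => n * π * (1 + v) / L with hb
  set E1 : ℤ → ℝ → ℂ := fun n x => Complex.exp ((↑(a n * (t + x)) : ℂ) * I) with hE1
  set E2 : ℤ → ℝ → ℂ := fun n x => Complex.exp ((↑(b n * (t - x)) : ℂ) * I) with hE2
  -- normal form of φ
  have hφ' : ∀ x s : ℝ, φ x s = ∑ n ∈ S,
      c n * (Complex.exp ((↑(a n * (s + x)) : ℂ) * I) - Complex.exp ((↑(b n * (s - x)) : ℂ) * I)) := by
    intro x s
    rw [hφ x s]
    refine Finset.sum_congr rfl fun n _ => ?_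
    have e1 : (n : ℂ) * (π : ℂ) * I * (1 - (v : ℂ)) * ((s : ℂ) + (x : ℂ)) / (L : ℂ)
        = (↑(a n * (s + x)) : ℂ) * I := by
      simp only [ha]; push_cast; ring
    have e2 : (n : ℂ) * (π : ℂ) * I * (1 + (v : ℂ)) * ((s : ℂ) - (x : ℂ)) / (L : ℂ)
        = (↑(b n * (s - x)) : ℂ) * I := by
      simp only [hb]; push_cast; ring
    rw [e1, e2]
  -- time derivative
  have hdt : ∀ x : ℝ, deriv (fun s => φ x s) t
      = ∑ n ∈ S, c n * ((↑(a n) : ℂ) * I * E1 n x - (↑(b n) : ℂ) * I * E2 n x) := by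
    intro x
    have hfun : (fun s => φ x s) = fun s : ℝ => ∑ n ∈ S,
        c n * (Complex.exp ((↑(a n * (s + x)) : ℂ) * I) - Complex.exp ((↑(b n * (s - x)) : ℂ) * I)) :=
      funext fun s => hφ' x s
    rw [hfun]
    refine HasDerivAt.deriv ?_
    refine HasDerivAt.fun_sum fun n _ => ?_
    have h1 := hasDerivAt_cexp_comp ((↑(a n) : ℂ) * I) ((↑(a n * x) : ℂ) * I)
      (fun s : ℝ => (↑(a n * (s + x)) : ℂ) * I) (by intro s; push_cast; ring) t
    have h2 := hasDerivAt_cexp_comp ((↑(b n) : ℂ) * I) ((↑(b n * (-x)) : ℂ) * I)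
      (fun s : ℝ => (↑(b n * (s - x)) : ℂ) * I) (by intro s; push_cast; ring) t
    exact (h1.sub h2).const_mul (c n)
  -- space derivative
  have hdx : ∀ x : ℝ, deriv (fun y => φ y t) x
      = ∑ n ∈ S, c n * ((↑(a n) : ℂ) * I * E1 n x + (↑(b n) : ℂ) * I * E2 n x) := by
    intro x
    have hfun : (fun y => φ y t) = fun y : ℝ => ∑ n ∈ S,
        c n * (Complex.exp ((↑(a n * (t + y)) : ℂ) * I) - Complex.exp ((↑(b n * (t - y)) : ℂ) * I)) :=
      funext fun y => hφ' y t
    rw [hfun]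
    refine HasDerivAt.deriv ?_
    refine HasDerivAt.fun_sum fun n _ => ?_
    have h1 := hasDerivAt_cexp_comp ((↑(a n) : ℂ) * I) ((↑(a n * t) : ℂ) * I)
      (fun y : ℝ => (↑(a n * (t + y)) : ℂ) * I) (by intro s; push_cast; ring) x
    have h2 := hasDerivAt_cexp_comp (-((↑(b n) : ℂ) * I)) ((↑(b n * t) : ℂ) * I)
      (fun y : ℝ => (↑(b n * (t - y)) : ℂ) * I) (by intro s; push_cast; ring) x
    have h3 := (h1.sub h2).const_mul (c n)
    convert h3 using 1
    rfl
    · rfl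
    · simp only [hE1, hE2]; ring
  set P : ℝ → ℂ := fun x => ∑ n ∈ S, (n : ℂ) * c n * E1 n x with hP
  set Q : ℝ → ℂ := fun x => ∑ n ∈ S, (n : ℂ) * c n * E2 n x with hQ
  -- combination identities
  have hfsum : ∀ x : ℝ,
      (∑ n ∈ S, c n * ((↑(a n) : ℂ) * I * E1 n x - (↑(b n) : ℂ) * I * E2 n x))
        + (v : ℂ) * (∑ n ∈ S, c n * ((↑(a n) : ℂ) * I * E1 n x + (↑(b n) : ℂ) * I * E2 n x))
      = ((π * (1 - v ^ 2) / L : ℝ) : ℂ) * I * (P x - Q x) := by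
    intro x
    simp only [hP, hQ]
    rw [← Finset.sum_sub_distrib, Finset.mul_sum, Finset.mul_sum, ← Finset.sum_add_distrib]
    refine Finset.sum_congr rfl fun n _ => ?_
    simp only [ha, hb]
    push_cast
    ring
  have hgsum : ∀ x : ℝ,
      (∑ n ∈ S, c n * ((↑(a n) : ℂ) * I * E1 n x + (↑(b n) : ℂ) * I * E2 n x))
      = ((π / L : ℝ) : ℂ) * I * ((1 - (v : ℂ)) * P x + (1 + (v : ℂ)) * Q x) := by
    intro x
    simp only [hP, hQ]
    rw [Finset.mul_sum, Finset.mul_sum, ← Finset.sum_add_distrib, Finset.mul_sum]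
    refine Finset.sum_congr rfl fun n _ => ?_
    simp only [ha, hb]
    push_cast
    ring
  -- the double-sum function g
  set g : ℝ → ℂ := fun x => ∑ n ∈ S, ∑ m ∈ S,
      ((n : ℂ) * c n) * (starRingEnd ℂ) ((m : ℂ) * c m) *
        ((1 - (v : ℂ)) * (Complex.exp ((↑((a n - a m) * t) : ℂ) * I)
              * Complex.exp (((↑(a n - a m) : ℂ) * I) * x))
          + (1 + (v : ℂ)) * (Complex.exp ((↑((b n - b m) * t) : ℂ) * I)
              * Complex.exp ((-((↑(b n - b m) : ℂ)) * I) * x))) with hg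
  have key1 : ∀ (n m : ℤ) (x : ℝ),
      Complex.exp ((↑((a n - a m) * t) : ℂ) * I) * Complex.exp (((↑(a n - a m) : ℂ) * I) * x)
        = E1 n x * (starRingEnd ℂ) (E1 m x) := by
    intro n m x
    rw [hE1]
    simp only []
    rw [conj_exp_ofReal_mul_I, ← Complex.exp_add, ← Complex.exp_add]
    congr 1
    push_cast
    ring
  have key2 : ∀ (n m : ℤ) (x : ℝ),
      Complex.exp ((↑((b n - b m) * t) : ℂ) * I) * Complex.exp ((-((↑(b n - b m) : ℂ)) * I) * x)
        = E2 n x * (starRingEnd ℂ) (E2 m x) := by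
    intro n m x
    rw [hE2]
    simp only []
    rw [conj_exp_ofReal_mul_I, ← Complex.exp_add, ← Complex.exp_add]
    congr 1
    push_cast
    ring
  have hgx : ∀ x : ℝ, g x = (1 - (v : ℂ)) * (P x * (starRingEnd ℂ) (P x))
      + (1 + (v : ℂ)) * (Q x * (starRingEnd ℂ) (Q x)) := by
    intro x
    simp only [hg, hP, hQ, map_sum]
    rw [Finset.sum_mul_sum, Finset.sum_mul_sum]
    rw [Finset.mul_sum, Finset.mul_sum, ← Finset.sum_add_distrib]
    refine Finset.sum_congr rfl fun n _ => ?_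
    rw [Finset.mul_sum, Finset.mul_sum, ← Finset.sum_add_distrib]
    refine Finset.sum_congr rfl fun m _ => ?_
    rw [key1 n m x, key2 n m x]
    simp only [map_mul]
    ring
  -- pointwise identity for the integrand
  have pointwise : ∀ x : ℝ,
      ‖deriv (fun s => φ x s) t + (v : ℂ) * deriv (fun y => φ y t) x‖ ^ 2
          + (1 - v ^ 2) * ‖deriv (fun y => φ y t) x‖ ^ 2
      = (2 * π ^ 2 * (1 - v ^ 2) / L ^ 2) * (g x).re := by
    intro x
    rw [hdt x, hdx x, hfsum x, hgsum x]
    have hre : (g x).re = (1 - v) * Complex.normSq (P x) + (1 + v) * Complex.normSq (Q x) := by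
      rw [hgx x, Complex.mul_conj, Complex.mul_conj]
      rw [show (1 - (v : ℂ)) * (↑(Complex.normSq (P x)) : ℂ)
          + (1 + (v : ℂ)) * (↑(Complex.normSq (Q x)) : ℂ)
          = ((↑((1 - v) * Complex.normSq (P x) + (1 + v) * Complex.normSq (Q x)) : ℂ)) from by
        push_cast; ring]
      rw [Complex.ofReal_re]
    rw [hre]
    simp only [Complex.sq_norm, Complex.normSq_mul, Complex.normSq_I, Complex.normSq_ofReal]
    rw [Complex.normSq_sub, Complex.normSq_add]
    rw [show (1 - (v : ℂ)) = ((1 - v : ℝ) : ℂ) from by push_cast; ring,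
        show (1 + (v : ℂ)) = ((1 + v : ℝ) : ℂ) from by push_cast; ring]
    simp only [Complex.normSq_mul, Complex.normSq_ofReal]
    rw [show ((1 - v : ℝ) : ℂ) * P x * (starRingEnd ℂ) (((1 + v : ℝ) : ℂ) * Q x)
        = ((( (1 - v) * (1 + v) : ℝ)) : ℂ) * (P x * (starRingEnd ℂ) (Q x)) from by
      simp only [map_mul, Complex.conj_ofReal]; push_cast; ring]
    rw [Complex.re_ofReal_mul]
    field_simp
    ring
  -- integrability helpers
  have contterm : ∀ n m : ℤ, Continuous (fun x : ℝ =>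
      ((n : ℂ) * c n) * (starRingEnd ℂ) ((m : ℂ) * c m) *
        ((1 - (v : ℂ)) * (Complex.exp ((↑((a n - a m) * t) : ℂ) * I)
              * Complex.exp (((↑(a n - a m) : ℂ) * I) * x))
          + (1 + (v : ℂ)) * (Complex.exp ((↑((b n - b m) * t) : ℂ) * I)
              * Complex.exp ((-((↑(b n - b m) : ℂ)) * I) * x)))) := by
    intro n m
    fun_prop
  have hgcont : Continuous g := by
    rw [hg]
    exact continuous_finset_sum _ fun n _ => continuous_finset_sum _ fun m _ => contterm n m
  -- the integral of g
  have hint : (∫ x in (v * t)..(L + v * t), g x)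
      = ((2 * L * ∑ n ∈ S, ‖(n : ℂ) * c n‖ ^ 2 : ℝ) : ℂ) := by
    simp only [hg]
    rw [intervalIntegral.integral_finset_sum (fun n _ =>
      (continuous_finset_sum _ fun m _ => contterm n m).intervalIntegrable _ _)]
    have : ∀ n ∈ S, (∫ x in (v * t)..(L + v * t), ∑ m ∈ S,
        ((n : ℂ) * c n) * (starRingEnd ℂ) ((m : ℂ) * c m) *
          ((1 - (v : ℂ)) * (Complex.exp ((↑((a n - a m) * t) : ℂ) * I)
                * Complex.exp (((↑(a n - a m) : ℂ) * I) * x))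
            + (1 + (v : ℂ)) * (Complex.exp ((↑((b n - b m) * t) : ℂ) * I)
                * Complex.exp ((-((↑(b n - b m) : ℂ)) * I) * x))))
        = 2 * L * (‖(n : ℂ) * c n‖ ^ 2 : ℝ) := by
      intro n hn
      rw [intervalIntegral.integral_finset_sum (fun m _ =>
        (contterm n m).intervalIntegrable _ _)]
      rw [Finset.sum_eq_single_of_mem n hn]
      · -- diagonal term
        have hconst : (fun x : ℝ =>
            ((n : ℂ) * c n) * (starRingEnd ℂ) ((n : ℂ) * c n) *
              ((1 - (v : ℂ)) * (Complex.exp ((↑((a n - a n) * t) : ℂ) * I)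
                    * Complex.exp (((↑(a n - a n) : ℂ) * I) * x))
                + (1 + (v : ℂ)) * (Complex.exp ((↑((b n - b n) * t) : ℂ) * I)
                    * Complex.exp ((-((↑(b n - b n) : ℂ)) * I) * x))))
            = fun _ : ℝ => ((n : ℂ) * c n) * (starRingEnd ℂ) ((n : ℂ) * c n) * 2 := by
          funext x
          simp only [sub_self, zero_mul, Complex.ofReal_zero, neg_zero, Complex.exp_zero,
            mul_one, one_mul]
          ring
        rw [hconst, intervalIntegral.integral_const]
        rw [Complex.mul_conj]
        have hLsub : L + v * t - v * t = L := by ring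
        rw [hLsub]
        rw [Complex.real_smul, ← Complex.sq_norm]
        push_cast
        ring
      · -- off-diagonal terms vanish
        intro m hm hmn
        have hkey : ((n : ℝ) - m) ≠ 0 := by
          intro h
          have h2 : n = m := by exact_mod_cast sub_eq_zero.mp h
          exact hmn h2.symm
        have h1v : (1 : ℝ) - v ≠ 0 := by linarith
        have h2v : (1 : ℝ) + v ≠ 0 := by linarith
        have hα : a n - a m ≠ 0 := by
          have hav : a n - a m = ((n : ℝ) - m) * π * (1 - v) / L := by
            simp only [ha]; ring
          rw [hav]
          exact div_ne_zero (mul_ne_zero (mul_ne_zero hkey Real.pi_ne_zero) h1v) hL0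
        have hβ : b n - b m ≠ 0 := by
          have hbv : b n - b m = ((n : ℝ) - m) * π * (1 + v) / L := by
            simp only [hb]; ring
          rw [hbv]
          exact div_ne_zero (mul_ne_zero (mul_ne_zero hkey Real.pi_ne_zero) h2v) hL0
        have hc1ne : ((a n - a m : ℝ) : ℂ) * I ≠ 0 :=
          mul_ne_zero (Complex.ofReal_ne_zero.mpr hα) Complex.I_ne_zero
        have hc2ne : -((b n - b m : ℝ) : ℂ) * I ≠ 0 :=
          mul_ne_zero (neg_ne_zero.mpr (Complex.ofReal_ne_zero.mpr hβ)) Complex.I_ne_zero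
        rw [intervalIntegral.integral_const_mul]
        apply mul_eq_zero_of_right
        have i1 : IntervalIntegrable (fun x : ℝ => (1 - (v : ℂ)) *
            (Complex.exp ((↑((a n - a m) * t) : ℂ) * I)
              * Complex.exp ((↑(a n - a m) : ℂ) * I * (x : ℂ)))) volume (v * t) (L + v * t) :=
          Continuous.intervalIntegrable (by fun_prop) _ _
        have i2 : IntervalIntegrable (fun x : ℝ => (1 + (v : ℂ)) *
            (Complex.exp ((↑((b n - b m) * t) : ℂ) * I)
              * Complex.exp (-(↑(b n - b m) : ℂ) * I * (x : ℂ)))) volume (v * t) (L + v * t) :=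
          Continuous.intervalIntegrable (by fun_prop) _ _
        rw [intervalIntegral.integral_add i1 i2, intervalIntegral.integral_const_mul,
          intervalIntegral.integral_const_mul, intervalIntegral.integral_const_mul,
          intervalIntegral.integral_const_mul, integral_exp_mul_complex hc1ne,
          integral_exp_mul_complex hc2ne]
        have hE : Complex.exp ((↑((a n - a m) * t) : ℂ) * I)
              * Complex.exp ((↑(a n - a m) : ℂ) * I * ((L + v * t : ℝ) : ℂ))
            = Complex.exp ((↑((b n - b m) * t) : ℂ) * I)
              * Complex.exp (-(↑(b n - b m) : ℂ) * I * ((L + v * t : ℝ) : ℂ)) := by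
          rw [← Complex.exp_add, ← Complex.exp_add]
          rw [show (↑((a n - a m) * t) : ℂ) * I + (↑(a n - a m) : ℂ) * I * ((L + v * t : ℝ) : ℂ)
              = ((((a n - a m) * (t + (L + v * t)) : ℝ)) : ℂ) * I from by push_cast; ring]
          rw [show (↑((b n - b m) * t) : ℂ) * I + -(↑(b n - b m) : ℂ) * I * ((L + v * t : ℝ) : ℂ)
              = ((((b n - b m) * (t - (L + v * t)) : ℝ)) : ℂ) * I from by push_cast; ring]
          refine exp_eq_exp_of_eq_add_int _ _ (n - m) ?_
          simp only [ha, hb]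
          push_cast
          field_simp
          ring
        have hF : Complex.exp ((↑((a n - a m) * t) : ℂ) * I)
              * Complex.exp ((↑(a n - a m) : ℂ) * I * ((v * t : ℝ) : ℂ))
            = Complex.exp ((↑((b n - b m) * t) : ℂ) * I)
              * Complex.exp (-(↑(b n - b m) : ℂ) * I * ((v * t : ℝ) : ℂ)) := by
          rw [← Complex.exp_add, ← Complex.exp_add]
          rw [show (↑((a n - a m) * t) : ℂ) * I + (↑(a n - a m) : ℂ) * I * ((v * t : ℝ) : ℂ)
              = ((((a n - a m) * (t + v * t) : ℝ)) : ℂ) * I from by push_cast; ring]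
          rw [show (↑((b n - b m) * t) : ℂ) * I + -(↑(b n - b m) : ℂ) * I * ((v * t : ℝ) : ℂ)
              = ((((b n - b m) * (t - v * t) : ℝ)) : ℂ) * I from by push_cast; ring]
          refine exp_eq_exp_of_eq_add_int _ _ 0 ?_
          simp only [ha, hb]
          push_cast
          field_simp
          ring
        have hcoef : (1 - (v : ℂ)) * (-(↑(b n - b m) : ℂ) * I)
            + (1 + (v : ℂ)) * ((↑(a n - a m) : ℂ) * I) = 0 := by
          simp only [ha, hb]
          push_cast
          field_simp
          ring
        have hdiv : (1 - (v : ℂ)) / ((↑(a n - a m) : ℂ) * I)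
            + (1 + (v : ℂ)) / (-(↑(b n - b m) : ℂ) * I) = 0 := by
          rw [div_add_div _ _ hc1ne hc2ne, div_eq_zero_iff]
          left
          linear_combination hcoef
        linear_combination
          ((1 - (v : ℂ)) / ((↑(a n - a m) : ℂ) * I)) * hE
          - ((1 - (v : ℂ)) / ((↑(a n - a m) : ℂ) * I)) * hF
          + (Complex.exp ((↑((b n - b m) * t) : ℂ) * I)
              * Complex.exp (-(↑(b n - b m) : ℂ) * I * ((L + v * t : ℝ) : ℂ))
            - Complex.exp ((↑((b n - b m) * t) : ℂ) * I)
              * Complex.exp (-(↑(b n - b m) : ℂ) * I * ((v * t : ℝ) : ℂ))) * hdiv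
    rw [Finset.sum_congr rfl this]
    push_cast
    rw [Finset.mul_sum]
  -- put everything together
  have hEq : (∫ x in (v * t)..(L + v * t),
      (‖deriv (fun s => φ x s) t + (v : ℂ) * deriv (fun y => φ y t) x‖ ^ 2
        + (1 - v ^ 2) * ‖deriv (fun y => φ y t) x‖ ^ 2))
      = (2 * π ^ 2 * (1 - v ^ 2) / L ^ 2) * (2 * L * ∑ n ∈ S, ‖(n : ℂ) * c n‖ ^ 2) := by
    rw [intervalIntegral.integral_congr (g := fun x => (2 * π ^ 2 * (1 - v ^ 2) / L ^ 2) * (g x).re)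
      (fun x _ => pointwise x)]
    rw [intervalIntegral.integral_const_mul]
    have hcomm : (∫ x in (v * t)..(L + v * t), (g x).re)
        = (∫ x in (v * t)..(L + v * t), g x).re := by
      have := (Complex.reCLM).intervalIntegral_comp_comm
        (hgcont.intervalIntegrable (μ := volume) (v * t) (L + v * t))
      simpa using this
    rw [hcomm, hint, Complex.ofReal_re]
  rw [hEq]
  field_simp
end

section
/- Suppose φ : ℝ × [0,∞) → ℝ is twice continuously differentiable, satisfies φ_tt = φ_xx for x ∈ (vt, L+vt) and t > 0, and φ(vt,t) = φ(L+vt,t) = 0 for all t ≥ 0. Then the energy 𝓔_v(t) = (1/2)∫_{vt}^{L+vt} ((φ_t + vφ_x)² + (1-v²)φ_x²) dx is constant in t. -/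
open MeasureTheory Complex Real Set

noncomputable section Stmt6Aux

private def sD (φ : ℝ → ℝ → ℝ) : ℝ × ℝ → (ℝ × ℝ →L[ℝ] ℝ) :=
  fderiv ℝ (fun p : ℝ × ℝ => φ p.1 p.2)

private def sH (φ : ℝ → ℝ → ℝ) : ℝ × ℝ → (ℝ × ℝ →L[ℝ] (ℝ × ℝ →L[ℝ] ℝ)) :=
  fderiv ℝ (sD φ)

private def sf (φ : ℝ → ℝ → ℝ) (v y t : ℝ) : ℝ :=
  (sD φ (y + v*t, t) (v,1))^2 + (1 - v^2) * (sD φ (y + v*t, t) (1,0))^2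

private def sf' (φ : ℝ → ℝ → ℝ) (v y t : ℝ) : ℝ :=
  2 * sD φ (y+v*t,t) (v,1) ^ 1 * (sH φ (y+v*t,t) (v,1) (v,1))
    + (1-v^2) * (2 * sD φ (y+v*t,t) (1,0) ^ 1 * (sH φ (y+v*t,t) (v,1) (1,0)))

private def sG (φ : ℝ → ℝ → ℝ) (v t y : ℝ) : ℝ :=
  (2*(1-v^2)) * (sD φ (y+v*t,t) (v,1) * sD φ (y+v*t,t) (1,0))
    + (2*v) * (sD φ (y+v*t,t) (v,1))^2

end Stmt6Aux

theorem stmt6 (L v : ℝ) (hL : 0 < L) (hv0 : 0 < v) (hv1 : v < 1)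
    (φ : ℝ → ℝ → ℝ)
    (hreg : ContDiff ℝ 2 (fun p : ℝ × ℝ => φ p.1 p.2))
    (hwave : ∀ t : ℝ, 0 < t → ∀ x : ℝ, v * t < x → x < L + v * t →
      deriv (fun s => deriv (fun s' => φ x s') s) t
        = deriv (fun y => deriv (fun y' => φ y' t) y) x)
    (hbc : ∀ t : ℝ, 0 ≤ t → φ (v * t) t = 0 ∧ φ (L + v * t) t = 0) :
    ∀ t : ℝ, 0 ≤ t →
      (1 / 2) * ∫ x in (v * t)..(L + v * t),
          ((deriv (fun s => φ x s) t + v * deriv (fun y => φ y t) x) ^ 2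
            + (1 - v ^ 2) * (deriv (fun y => φ y t) x) ^ 2)
        = (1 / 2) * ∫ x in (0 : ℝ)..L,
            ((deriv (fun s => φ x s) 0 + v * deriv (fun y => φ y 0) x) ^ 2
              + (1 - v ^ 2) * (deriv (fun y => φ y 0) x) ^ 2) := by
  have hD1 : ContDiff ℝ 1 (sD φ) := hreg.fderiv_right (by norm_num)
  have hDcont : Continuous (sD φ) := hD1.continuous
  have hΦd : Differentiable ℝ (fun p : ℝ × ℝ => φ p.1 p.2) := hreg.differentiable (by norm_num)
  have hfd : ∀ p, HasFDerivAt (fun p : ℝ × ℝ => φ p.1 p.2) (sD φ p) p := fun p => (hΦd p).hasFDerivAt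
  have hDd : Differentiable ℝ (sD φ) := hD1.differentiable one_ne_zero
  have hDfd : ∀ p, HasFDerivAt (sD φ) (sH φ p) p := fun p => (hDd p).hasFDerivAt
  have hHcont : Continuous (sH φ) := hD1.continuous_fderiv one_ne_zero
  have hsymm : ∀ p u w, sH φ p u w = sH φ p w u := fun p u w =>
    second_derivative_symmetric hfd (hDfd p) u w
  have hDapp : ∀ (w p : ℝ × ℝ), HasFDerivAt (fun q => sD φ q w)
      ((ContinuousLinearMap.apply ℝ ℝ w).comp (sH φ p)) p := fun w p =>
    (ContinuousLinearMap.apply ℝ ℝ w).hasFDerivAt.comp p (hDfd p)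
  have keyD : ∀ (w : ℝ × ℝ) (c : ℝ → ℝ × ℝ) (c' : ℝ × ℝ) (s : ℝ), HasDerivAt c c' s →
      HasDerivAt (fun u => sD φ (c u) w) (sH φ (c s) c' w) s := fun w c c' s hc =>
    (hDapp w (c s)).comp_hasDerivAt s hc
  have keyΦ : ∀ (c : ℝ → ℝ × ℝ) (c' : ℝ × ℝ) (s : ℝ), HasDerivAt c c' s →
      HasDerivAt (fun u => φ (c u).1 (c u).2) (sD φ (c s) c') s := fun c c' s hc =>
    (hfd (c s)).comp_hasDerivAt s hc
  have hdt : ∀ x t : ℝ, deriv (fun s => φ x s) t = sD φ (x, t) (0,1) := fun x t =>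
    (keyΦ (fun s => (x, s)) (0,1) t ((hasDerivAt_const t x).prodMk (hasDerivAt_id t))).deriv
  have hdx : ∀ x t : ℝ, deriv (fun y => φ y t) x = sD φ (x, t) (1,0) := fun x t =>
    (keyΦ (fun y => (y, t)) (1,0) x ((hasDerivAt_id x).prodMk (hasDerivAt_const x t))).deriv
  -- wave equation in second-derivative form
  have hwaveH : ∀ t : ℝ, 0 < t → ∀ x : ℝ, v*t < x → x < L + v*t →
      sH φ (x,t) (0,1) (0,1) = sH φ (x,t) (1,0) (1,0) := by
    intro t ht x hx1 hx2
    have h1 : deriv (fun s => deriv (fun s' => φ x s') s) t = sH φ (x,t) (0,1) (0,1) := by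
      have he : (fun s => deriv (fun s' => φ x s') s) = fun s => sD φ (x, s) (0,1) := by
        funext s; exact hdt x s
      rw [he]
      exact (keyD (0,1) (fun s => (x,s)) (0,1) t
        ((hasDerivAt_const t x).prodMk (hasDerivAt_id t))).deriv
    have h2 : deriv (fun y => deriv (fun y' => φ y' t) y) x = sH φ (x,t) (1,0) (1,0) := by
      have he : (fun y => deriv (fun y' => φ y' t) y) = fun y => sD φ (y, t) (1,0) := by
        funext y; exact hdx y t
      rw [he]
      exact (keyD (1,0) (fun y => (y,t)) (1,0) x
        ((hasDerivAt_id x).prodMk (hasDerivAt_const x t))).deriv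
    rw [← h1, ← h2, hwave t ht x hx1 hx2]
  -- boundary values of the "comoving time derivative"
  have hbd : ∀ x₀ : ℝ, (∀ t : ℝ, 0 ≤ t → φ (x₀ + v*t) t = 0) → ∀ t : ℝ, 0 < t →
      sD φ (x₀ + v*t, t) (v, 1) = 0 := by
    intro x₀ hzero t ht
    have hcv : HasDerivAt (fun s : ℝ => (x₀ + v*s, s)) ((v:ℝ), (1:ℝ)) t := by
      have h1 : HasDerivAt (fun s : ℝ => x₀ + v*s) v t := by
        simpa using (((hasDerivAt_id t).const_mul v).const_add x₀)
      exact h1.prodMk (hasDerivAt_id t)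
    have hc : HasDerivAt (fun s : ℝ => φ (x₀ + v*s) s) (sD φ (x₀ + v*t, t) (v,1)) t :=
      keyΦ (fun s => (x₀ + v*s, s)) (v,1) t hcv
    have h0 : (fun s : ℝ => φ (x₀ + v*s) s) =ᶠ[nhds t] fun _ => (0:ℝ) := by
      filter_upwards [Ioi_mem_nhds ht] with s hs
      exact hzero s (le_of_lt hs)
    have hc0 : HasDerivAt (fun _ : ℝ => (0:ℝ)) (sD φ (x₀ + v*t, t) (v,1)) t :=
      hc.congr_of_eventuallyEq h0.symm
    exact hc0.unique (hasDerivAt_const t 0)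
  -- time derivative of the integrand
  have hfd' : ∀ y t : ℝ, HasDerivAt (fun s => sf φ v y s) (sf' φ v y t) t := by
    intro y t
    have hcv : HasDerivAt (fun s : ℝ => (y + v*s, s)) ((v:ℝ), (1:ℝ)) t := by
      have h1 : HasDerivAt (fun s : ℝ => y + v*s) v t := by
        simpa using (((hasDerivAt_id t).const_mul v).const_add y)
      exact h1.prodMk (hasDerivAt_id t)
    have hA : HasDerivAt (fun s => sD φ (y+v*s, s) (v,1)) (sH φ (y+v*t,t) (v,1) (v,1)) t :=
      keyD (v,1) (fun s => (y+v*s, s)) (v,1) t hcv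
    have hB : HasDerivAt (fun s => sD φ (y+v*s, s) (1,0)) (sH φ (y+v*t,t) (v,1) (1,0)) t :=
      keyD (1,0) (fun s => (y+v*s, s)) (v,1) t hcv
    have h := (hA.pow 2).add ((hB.pow 2).const_mul (1 - v^2))
    simp only [sf, sf']
    exact h.congr_deriv (by norm_num)
  -- continuity facts
  have hcp : Continuous (fun p : ℝ × ℝ => ((p.1 + v*p.2 : ℝ), (p.2 : ℝ))) := by fun_prop
  have hDw : ∀ w : ℝ × ℝ, Continuous (fun q : ℝ × ℝ => sD φ q w) := fun w =>
    hDcont.clm_apply continuous_const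
  have hHw : ∀ u w : ℝ × ℝ, Continuous (fun q : ℝ × ℝ => sH φ q u w) := fun u w =>
    (hHcont.clm_apply continuous_const).clm_apply continuous_const
  have hfc : Continuous (fun p : ℝ × ℝ => sf φ v p.1 p.2) := by
    simp only [sf]
    exact (((hDw (v,1)).comp hcp).pow 2).add
      (continuous_const.mul (((hDw (1,0)).comp hcp).pow 2))
  have hf'c : Continuous (fun p : ℝ × ℝ => sf' φ v p.1 p.2) := by
    simp only [sf']
    exact ((continuous_const.mul (((hDw (v,1)).comp hcp).pow 1)).mul
        ((hHw (v,1) (v,1)).comp hcp)).add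
      (continuous_const.mul ((continuous_const.mul (((hDw (1,0)).comp hcp).pow 1)).mul
        ((hHw (v,1) (1,0)).comp hcp)))
  -- reduction of the statement's integral
  have hred : ∀ t : ℝ,
      (∫ x in (v * t)..(L + v * t),
          ((deriv (fun s => φ x s) t + v * deriv (fun y => φ y t) x) ^ 2
            + (1 - v ^ 2) * (deriv (fun y => φ y t) x) ^ 2))
        = ∫ y in (0:ℝ)..L, sf φ v y t := by
    intro t
    have hv' : ((v,1) : ℝ × ℝ) = (0,1) + v • ((1:ℝ),(0:ℝ)) := by
      simp [Prod.ext_iff]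
    have h1 : ∀ x : ℝ,
        ((deriv (fun s => φ x s) t + v * deriv (fun y => φ y t) x) ^ 2
          + (1 - v ^ 2) * (deriv (fun y => φ y t) x) ^ 2)
        = (sD φ (x,t) (v,1))^2 + (1 - v^2) * (sD φ (x,t) (1,0))^2 := by
      intro x
      rw [hdt, hdx]
      rw [hv', map_add, _root_.map_smul, smul_eq_mul]
    rw [intervalIntegral.integral_congr (g := fun x => (sD φ (x,t) (v,1))^2
      + (1 - v^2) * (sD φ (x,t) (1,0))^2) (fun x _ => h1 x)]
    have h2 := intervalIntegral.integral_comp_add_right (a := 0) (b := L)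
      (fun x => (sD φ (x,t) (v,1))^2 + (1 - v^2) * (sD φ (x,t) (1,0))^2) (v*t)
    rw [zero_add] at h2
    rw [← h2]
    simp only [sf]
  -- the energy function
  set F : ℝ → ℝ := fun t => ∫ y in (0:ℝ)..L, sf φ v y t with hF
  -- derivative of F for t > 0
  have hF' : ∀ t₀ : ℝ, 0 < t₀ →
      HasDerivAt F (∫ y in (0:ℝ)..L, sf' φ v y t₀) t₀ := by
    intro t₀ ht₀
    obtain ⟨C, hC⟩ := (isCompact_Icc.prod isCompact_Icc :
        IsCompact (Icc (0:ℝ) L ×ˢ Icc (t₀-1) (t₀+1))).exists_bound_of_continuousOn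
      hf'c.continuousOn
    have key := intervalIntegral.hasDerivAt_integral_of_dominated_loc_of_deriv_le
      (F := fun t y => sf φ v y t) (F' := fun t y => sf' φ v y t) (x₀ := t₀)
      (a := 0) (b := L) (μ := volume) (bound := fun _ => C) (s := Metric.ball t₀ 1)
      (Metric.ball_mem_nhds t₀ one_pos)
      (Filter.Eventually.of_forall fun t =>
        ((hfc.comp (Continuous.prodMk_left t)).aestronglyMeasurable))
      ((hfc.comp (Continuous.prodMk_left t₀)).intervalIntegrable 0 L)
      ((hf'c.comp (Continuous.prodMk_left t₀)).aestronglyMeasurable)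
      ?_ (intervalIntegrable_const) ?_
    · exact key.2
    · refine Filter.Eventually.of_forall fun y hy t ht => ?_
      refine hC (y, t) ⟨?_, ?_⟩
      · rw [uIoc_of_le hL.le] at hy
        exact ⟨hy.1.le, hy.2⟩
      · rw [Real.ball_eq_Ioo] at ht
        exact ⟨ht.1.le, ht.2.le⟩
    · exact Filter.Eventually.of_forall fun y hy t ht => hfd' y t
  -- the integral of sf' vanishes for t₀ > 0
  have hint0 : ∀ t₀ : ℝ, 0 < t₀ → (∫ y in (0:ℝ)..L, sf' φ v y t₀) = 0 := by
    intro t₀ ht₀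
    have hcv : ∀ y : ℝ, HasDerivAt (fun z : ℝ => (z + v*t₀, t₀)) ((1:ℝ), (0:ℝ)) y := fun y =>
      ((hasDerivAt_id y).add_const (v*t₀)).prodMk (hasDerivAt_const y t₀)
    have hA : ∀ y : ℝ, HasDerivAt (fun z => sD φ (z+v*t₀, t₀) (v,1))
        (sH φ (y+v*t₀,t₀) (1,0) (v,1)) y := fun y =>
      keyD (v,1) (fun z => (z+v*t₀, t₀)) (1,0) y (hcv y)
    have hB : ∀ y : ℝ, HasDerivAt (fun z => sD φ (z+v*t₀, t₀) (1,0))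
        (sH φ (y+v*t₀,t₀) (1,0) (1,0)) y := fun y =>
      keyD (1,0) (fun z => (z+v*t₀, t₀)) (1,0) y (hcv y)
    have hGd : ∀ y : ℝ, HasDerivAt (sG φ v t₀)
        ((2*(1-v^2)) * (sH φ (y+v*t₀,t₀) (1,0) (v,1) * sD φ (y+v*t₀,t₀) (1,0)
            + sD φ (y+v*t₀,t₀) (v,1) * sH φ (y+v*t₀,t₀) (1,0) (1,0))
          + (2*v) * (2 * sD φ (y+v*t₀,t₀) (v,1) ^ 1 * sH φ (y+v*t₀,t₀) (1,0) (v,1))) y := by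
      intro y
      have h := (((hA y).mul (hB y)).const_mul (2*(1-v^2))).add
        (((hA y).pow 2).const_mul (2*v))
      exact h
    have halg : ∀ y ∈ Ioo (0:ℝ) L,
        ((2*(1-v^2)) * (sH φ (y+v*t₀,t₀) (1,0) (v,1) * sD φ (y+v*t₀,t₀) (1,0)
            + sD φ (y+v*t₀,t₀) (v,1) * sH φ (y+v*t₀,t₀) (1,0) (1,0))
          + (2*v) * (2 * sD φ (y+v*t₀,t₀) (v,1) ^ 1 * sH φ (y+v*t₀,t₀) (1,0) (v,1)))
        = sf' φ v y t₀ := by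
      intro y hy
      have hw : sH φ (y+v*t₀,t₀) (0,1) (0,1) = sH φ (y+v*t₀,t₀) (1,0) (1,0) :=
        hwaveH t₀ ht₀ (y+v*t₀) (by linarith [hy.1]) (by linarith [hy.2])
      have hs : sH φ (y+v*t₀,t₀) (0,1) (1,0) = sH φ (y+v*t₀,t₀) (1,0) (0,1) :=
        hsymm _ _ _
      have hv' : ((v,1) : ℝ × ℝ) = (0,1) + v • ((1:ℝ),(0:ℝ)) := by
        simp [Prod.ext_iff]
      simp only [sf', hv', map_add, _root_.map_smul, ContinuousLinearMap.add_apply,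
        ContinuousLinearMap.coe_smul', Pi.smul_apply, smul_eq_mul, hw, hs]
      ring
    have hGcont : Continuous (sG φ v t₀) := by
      have : sG φ v t₀ = fun y => (2*(1-v^2)) * (sD φ (y+v*t₀,t₀) (v,1) * sD φ (y+v*t₀,t₀) (1,0))
          + (2*v) * (sD φ (y+v*t₀,t₀) (v,1))^2 := rfl
      rw [this]
      have hc1 : Continuous (fun y : ℝ => ((y + v*t₀ : ℝ), (t₀ : ℝ))) := by fun_prop
      exact (continuous_const.mul (((hDw (v,1)).comp hc1).mul ((hDw (1,0)).comp hc1))).add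
        (continuous_const.mul (((hDw (v,1)).comp hc1).pow 2))
    have hf'cont : Continuous (fun y => sf' φ v y t₀) :=
      hf'c.comp (Continuous.prodMk continuous_id continuous_const)
    have hFTC := intervalIntegral.integral_eq_sub_of_hasDeriv_right_of_le hL.le
      hGcont.continuousOn
      (fun y hy => by
        have h := hGd y
        rw [halg y hy] at h
        exact h.hasDerivWithinAt)
      (hf'cont.intervalIntegrable 0 L)
    rw [hFTC]
    have ha0 : sD φ (0 + v*t₀, t₀) (v,1) = 0 := by
      refine hbd 0 (fun t ht => ?_) t₀ ht₀
      simpa using (hbc t ht).1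
    have haL : sD φ (L + v*t₀, t₀) (v,1) = 0 :=
      hbd L (fun t ht => (hbc t ht).2) t₀ ht₀
    have ha0' : sD φ (v*t₀, t₀) (v,1) = 0 := by simpa using ha0
    simp [sG, ha0', haL]
  -- F is constant on (0, ∞)
  have hFd0 : ∀ s : ℝ, 0 < s → HasDerivAt F 0 s := by
    intro s hs
    have h := hF' s hs
    rwa [hint0 s hs] at h
  have hconst : ∀ t : ℝ, 0 < t → ∀ s : ℝ, 0 < s → s ≤ t → F t = F s := by
    intro t ht s hs hst
    have h := constant_of_has_deriv_right_zero (f := F) (a := s) (b := t)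
      (fun x hx => (hFd0 x (lt_of_lt_of_le hs hx.1)).continuousAt.continuousWithinAt)
      (fun x hx => (hFd0 x (lt_of_lt_of_le hs hx.1)).hasDerivWithinAt)
    exact h t ⟨hst, le_rfl⟩
  -- F is continuous
  have hFcont : Continuous F := by
    rw [hF]
    exact intervalIntegral.continuous_parametric_intervalIntegral_of_continuous'
      (μ := volume) (f := fun t y => sf φ v y t)
      (hfc.comp continuous_swap) 0 L
  -- conclude
  have hmain : ∀ t : ℝ, 0 ≤ t → F t = F 0 := by
    intro t ht
    rcases eq_or_lt_of_le ht with h | h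
    · rw [← h]
    · have h1 : Filter.Tendsto F (nhdsWithin 0 (Ioi 0)) (nhds (F 0)) :=
        (hFcont.continuousAt.continuousWithinAt)
      have h2 : Filter.Tendsto F (nhdsWithin 0 (Ioi 0)) (nhds (F t)) := by
        refine Filter.Tendsto.congr' ?_ tendsto_const_nhds
        filter_upwards [Ioc_mem_nhdsGT h] with s hs
        exact hconst t h s hs.1 hs.2
      exact tendsto_nhds_unique h2 h1
  intro t ht
  have e1 := hred t
  have e0 : (∫ x in (0:ℝ)..L,
      ((deriv (fun s => φ x s) 0 + v * deriv (fun y => φ y 0) x) ^ 2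
        + (1 - v ^ 2) * (deriv (fun y => φ y 0) x) ^ 2)) = F 0 := by
    have h := hred 0
    rw [mul_zero] at h
    simpa using h
  rw [e1, e0, hF]
  exact congrArg (fun z => 1/2 * z) (hmain t ht)
end

section
/- Boundary observability at one endpoint for finite series: if φ(x,t) = Σ_{n∈S} c_n (exp(nπi(1-v)(t+x)/L) − exp(nπi(1+v)(t-x)/L)) with S a finite set of nonzero integers, and 𝓔_v := (2π²(1-v²)/L)Σ_{n∈S}|n c_n|², then ∫_0^{T_v} |∂ₓφ(vt,t)|² dt = (4/(1-v²)²)·𝓔_v, where T_v = 2L/(1-v²). -/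
open MeasureTheory Complex Real

set_option maxHeartbeats 1600000 in
theorem stmt12 (L v : ℝ) (hL : 0 < L) (hv0 : 0 < v) (hv1 : v < 1)
    (S : Finset ℤ) (hS : ∀ n ∈ S, n ≠ 0) (c : ℤ → ℂ) (φ : ℝ → ℝ → ℂ)
    (hφ : ∀ x t : ℝ, φ x t = ∑ n ∈ S, c n * (Complex.exp ((n : ℂ) * (Real.pi : ℂ) * Complex.I * ((1 : ℂ) - (v : ℂ)) * ((t : ℂ) + (x : ℂ)) / (L : ℂ)) - Complex.exp ((n : ℂ) * (Real.pi : ℂ) * Complex.I * ((1 : ℂ) + (v : ℂ)) * ((t : ℂ) - (x : ℂ)) / (L : ℂ)))) :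
    ∫ t in (0 : ℝ)..(2 * L / (1 - v ^ 2)),
        (‖deriv (fun y => φ y t) (v * t)‖) ^ 2
      = (4 / (1 - v ^ 2) ^ 2) *
          ((2 * Real.pi ^ 2 * (1 - v ^ 2) / L) * ∑ n ∈ S, (‖(n : ℂ) * c n‖) ^ 2) := by
  have hL0 : (L : ℝ) ≠ 0 := ne_of_gt hL
  have hw0 : (1 : ℝ) - v ^ 2 ≠ 0 := by nlinarith
  have hπ : Real.pi ≠ 0 := Real.pi_ne_zero
  set ω : ℝ := Real.pi * (1 - v ^ 2) / L with hω
  have hωne : ω ≠ 0 := by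
    simp only [hω]
    exact div_ne_zero (mul_ne_zero hπ hw0) hL0
  set T : ℝ := 2 * L / (1 - v ^ 2) with hT
  set a : ℤ → ℂ := fun n => c n * (2 * (n : ℂ) * (Real.pi : ℂ) * Complex.I / (L : ℂ)) with ha
  -- Step A: compute the spatial derivative along the ray x = v t
  have hderiv : ∀ t : ℝ, deriv (fun y => φ y t) (v * t)
      = ∑ n ∈ S, a n * Complex.exp (Complex.I * (n : ℂ) * (ω : ℂ) * (t : ℂ)) := by
    intro t
    have hD : HasDerivAt (fun y => φ y t)
        (∑ n ∈ S, c n *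
          (Complex.exp ((n : ℂ) * (Real.pi : ℂ) * Complex.I * ((1 : ℂ) - (v : ℂ)) * ((t : ℂ) + ((v*t : ℝ) : ℂ)) / (L : ℂ)) * ((n : ℂ) * Real.pi * Complex.I * (1 - (v:ℂ)) / L)
           + Complex.exp ((n : ℂ) * (Real.pi : ℂ) * Complex.I * ((1 : ℂ) + (v : ℂ)) * ((t : ℂ) - ((v*t : ℝ) : ℂ)) / (L : ℂ)) * ((n : ℂ) * Real.pi * Complex.I * (1 + (v:ℂ)) / L)))
        (v * t) := by
      have hbase : ∀ x : ℝ, (fun y => φ y t) x = ∑ n ∈ S, c n *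
          (Complex.exp ((n : ℂ) * (Real.pi : ℂ) * Complex.I * ((1 : ℂ) - (v : ℂ)) * ((t : ℂ) + (x : ℂ)) / (L : ℂ))
          - Complex.exp ((n : ℂ) * (Real.pi : ℂ) * Complex.I * ((1 : ℂ) + (v : ℂ)) * ((t : ℂ) - (x : ℂ)) / (L : ℂ))) :=
        fun x => hφ x t
      rw [show (fun y => φ y t) = fun y : ℝ => ∑ n ∈ S, c n *
          (Complex.exp ((n : ℂ) * (Real.pi : ℂ) * Complex.I * ((1 : ℂ) - (v : ℂ)) * ((t : ℂ) + (y : ℂ)) / (L : ℂ))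
          - Complex.exp ((n : ℂ) * (Real.pi : ℂ) * Complex.I * ((1 : ℂ) + (v : ℂ)) * ((t : ℂ) - (y : ℂ)) / (L : ℂ)))
        from funext hbase]
      apply HasDerivAt.fun_sum
      intro n _
      have h1 : HasDerivAt (fun y : ℝ => ((y : ℂ))) 1 (v * t) := by
        simpa using (hasDerivAt_id (v * t)).ofReal_comp
      have hadd : HasDerivAt (fun y : ℝ => ((t : ℂ) + (y : ℂ))) 1 (v * t) := h1.const_add _
      have hsub : HasDerivAt (fun y : ℝ => ((t : ℂ) - (y : ℂ))) (-1) (v * t) := h1.const_sub _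
      have e1 : HasDerivAt (fun y : ℝ => Complex.exp ((n : ℂ) * (Real.pi : ℂ) * Complex.I * ((1 : ℂ) - (v : ℂ)) * ((t : ℂ) + (y : ℂ)) / (L : ℂ)))
          (Complex.exp ((n : ℂ) * (Real.pi : ℂ) * Complex.I * ((1 : ℂ) - (v : ℂ)) * ((t : ℂ) + ((v*t : ℝ) : ℂ)) / (L : ℂ)) * ((n : ℂ) * (Real.pi : ℂ) * Complex.I * ((1 : ℂ) - (v : ℂ)) * 1 / (L : ℂ))) (v * t) :=
        ((hadd.const_mul ((n : ℂ) * (Real.pi : ℂ) * Complex.I * ((1 : ℂ) - (v : ℂ)))).div_const (L : ℂ)).cexp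
      have e2 : HasDerivAt (fun y : ℝ => Complex.exp ((n : ℂ) * (Real.pi : ℂ) * Complex.I * ((1 : ℂ) + (v : ℂ)) * ((t : ℂ) - (y : ℂ)) / (L : ℂ)))
          (Complex.exp ((n : ℂ) * (Real.pi : ℂ) * Complex.I * ((1 : ℂ) + (v : ℂ)) * ((t : ℂ) - ((v*t : ℝ) : ℂ)) / (L : ℂ)) * ((n : ℂ) * (Real.pi : ℂ) * Complex.I * ((1 : ℂ) + (v : ℂ)) * (-1) / (L : ℂ))) (v * t) :=
        ((hsub.const_mul ((n : ℂ) * (Real.pi : ℂ) * Complex.I * ((1 : ℂ) + (v : ℂ)))).div_const (L : ℂ)).cexp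
      have heq : c n *
          (Complex.exp ((n : ℂ) * (Real.pi : ℂ) * Complex.I * ((1 : ℂ) - (v : ℂ)) * ((t : ℂ) + ((v*t : ℝ) : ℂ)) / (L : ℂ)) * ((n : ℂ) * Real.pi * Complex.I * (1 - (v:ℂ)) / L)
           + Complex.exp ((n : ℂ) * (Real.pi : ℂ) * Complex.I * ((1 : ℂ) + (v : ℂ)) * ((t : ℂ) - ((v*t : ℝ) : ℂ)) / (L : ℂ)) * ((n : ℂ) * Real.pi * Complex.I * (1 + (v:ℂ)) / L))
          = c n *
          (Complex.exp ((n : ℂ) * (Real.pi : ℂ) * Complex.I * ((1 : ℂ) - (v : ℂ)) * ((t : ℂ) + ((v*t : ℝ) : ℂ)) / (L : ℂ)) * ((n : ℂ) * (Real.pi : ℂ) * Complex.I * ((1 : ℂ) - (v : ℂ)) * 1 / (L : ℂ))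
           - Complex.exp ((n : ℂ) * (Real.pi : ℂ) * Complex.I * ((1 : ℂ) + (v : ℂ)) * ((t : ℂ) - ((v*t : ℝ) : ℂ)) / (L : ℂ)) * ((n : ℂ) * (Real.pi : ℂ) * Complex.I * ((1 : ℂ) + (v : ℂ)) * (-1) / (L : ℂ))) := by
        ring
      rw [heq]
      exact (e1.sub e2).const_mul (c n)
    rw [hD.deriv]
    apply Finset.sum_congr rfl
    intro n _
    have hexp1 : (n : ℂ) * (Real.pi : ℂ) * Complex.I * ((1 : ℂ) - (v : ℂ)) * ((t : ℂ) + ((v*t : ℝ) : ℂ)) / (L : ℂ)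
        = Complex.I * (n : ℂ) * (ω : ℂ) * (t : ℂ) := by
      simp only [hω]
      push_cast
      ring
    have hexp2 : (n : ℂ) * (Real.pi : ℂ) * Complex.I * ((1 : ℂ) + (v : ℂ)) * ((t : ℂ) - ((v*t : ℝ) : ℂ)) / (L : ℂ)
        = Complex.I * (n : ℂ) * (ω : ℂ) * (t : ℂ) := by
      simp only [hω]
      push_cast
      ring
    rw [hexp1, hexp2, ha]
    ring
  simp only [hderiv]
  -- Step B: compute the integral
  set F : ℝ → ℂ := fun t => ∑ n ∈ S, a n * Complex.exp (Complex.I * (n : ℂ) * (ω : ℂ) * (t : ℂ)) with hF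
  have habs : ∀ t : ℝ, ‖F t‖ ^ 2 = (F t * (starRingEnd ℂ) (F t)).re := by
    intro t
    rw [Complex.mul_conj]
    simp [Complex.sq_norm]
  have hprod : ∀ t : ℝ, F t * (starRingEnd ℂ) (F t)
      = ∑ n ∈ S, ∑ m ∈ S, (a n * (starRingEnd ℂ) (a m)) * Complex.exp (Complex.I * ((n : ℂ) - (m : ℂ)) * (ω : ℂ) * (t : ℂ)) := by
    intro t
    rw [hF]
    rw [map_sum, Finset.sum_mul_sum]
    apply Finset.sum_congr rfl; intro n _
    apply Finset.sum_congr rfl; intro m _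
    rw [map_mul]
    have hc : (starRingEnd ℂ) (Complex.exp (Complex.I * (m : ℂ) * (ω : ℂ) * (t : ℂ)))
        = Complex.exp (-(Complex.I * (m : ℂ) * (ω : ℂ) * (t : ℂ))) := by
      rw [← Complex.exp_conj]
      congr 1
      simp only [map_mul, Complex.conj_I, Complex.conj_ofReal, map_intCast]
      ring
    have hmerge : Complex.exp (Complex.I * (n : ℂ) * (ω : ℂ) * (t : ℂ)) * Complex.exp (-(Complex.I * (m : ℂ) * (ω : ℂ) * (t : ℂ)))
        = Complex.exp (Complex.I * ((n : ℂ) - (m : ℂ)) * (ω : ℂ) * (t : ℂ)) := by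
      rw [← Complex.exp_add]
      congr 1
      ring
    rw [hc, ← hmerge]
    ring
  have hcont : ∀ n m : ℤ, Continuous (fun t : ℝ => (a n * (starRingEnd ℂ) (a m)) * Complex.exp (Complex.I * ((n : ℂ) - (m : ℂ)) * (ω : ℂ) * (t : ℂ))) := by
    intro n m
    exact continuous_const.mul (Complex.continuous_exp.comp
      (continuous_const.mul Complex.continuous_ofReal))
  -- the inner complex integral
  have hterm : ∀ n ∈ S, ∀ m ∈ S,
      (∫ t in (0:ℝ)..T, (a n * (starRingEnd ℂ) (a m)) * Complex.exp (Complex.I * ((n : ℂ) - (m : ℂ)) * (ω : ℂ) * (t : ℂ)))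
      = if m = n then a n * (starRingEnd ℂ) (a n) * (T : ℂ) else 0 := by
    intro n _ m _
    by_cases hnm : m = n
    · subst hnm
      simp only [sub_self, mul_zero, zero_mul, Complex.exp_zero, mul_one, if_true]
      rw [intervalIntegral.integral_const]
      rw [sub_zero, Complex.real_smul]
      ring
    · rw [if_neg hnm]
      have hcne : Complex.I * ((n : ℂ) - (m : ℂ)) * (ω : ℂ) ≠ 0 := by
        apply mul_ne_zero (mul_ne_zero Complex.I_ne_zero _)
        · exact_mod_cast hωne
        · have : (n : ℂ) ≠ (m : ℂ) := by exact_mod_cast fun h => hnm (by exact_mod_cast h.symm)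
          exact sub_ne_zero.mpr this
      rw [intervalIntegral.integral_const_mul]
      have : (∫ t in (0:ℝ)..T, Complex.exp (Complex.I * ((n : ℂ) - (m : ℂ)) * (ω : ℂ) * (t : ℂ)))
          = (Complex.exp (Complex.I * ((n : ℂ) - (m : ℂ)) * (ω : ℂ) * (T:ℂ)) - Complex.exp (Complex.I * ((n : ℂ) - (m : ℂ)) * (ω : ℂ) * ((0:ℝ):ℂ))) / (Complex.I * ((n : ℂ) - (m : ℂ)) * (ω : ℂ)) := by
        exact integral_exp_mul_complex hcne
      rw [this]
      have hωT' : ω * T = 2 * Real.pi := by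
        rw [hω, hT]
        field_simp
      have hωT : (ω : ℂ) * (T : ℂ) = 2 * (Real.pi : ℂ) := by
        rw [← Complex.ofReal_mul, hωT']
        push_cast
        ring
      have hexpT : Complex.exp (Complex.I * ((n : ℂ) - (m : ℂ)) * (ω : ℂ) * (T:ℂ)) = 1 := by
        rw [show Complex.I * ((n : ℂ) - (m : ℂ)) * (ω : ℂ) * (T:ℂ) = ((n : ℂ) - (m : ℂ)) * ((ω : ℂ) * (T:ℂ)) * Complex.I by ring, hωT]
        rw [show ((n : ℂ) - (m : ℂ)) * (2 * (Real.pi:ℂ)) * Complex.I = ((n - m : ℤ) : ℂ) * (2 * (Real.pi:ℂ) * Complex.I) by push_cast; ring]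
        exact Complex.exp_int_mul_two_pi_mul_I (n - m)
      rw [hexpT]
      simp
  -- putting it together
  have hint : (∫ t in (0:ℝ)..T, ‖F t‖ ^ 2)
      = (∑ n ∈ S, a n * (starRingEnd ℂ) (a n) * (T : ℂ)).re := by
    have h1 : (∫ t in (0:ℝ)..T, ‖F t‖ ^ 2)
        = ∫ t in (0:ℝ)..T, (Complex.reCLM ((∑ n ∈ S, ∑ m ∈ S, (a n * (starRingEnd ℂ) (a m)) * Complex.exp (Complex.I * ((n : ℂ) - (m : ℂ)) * (ω : ℂ) * (t : ℂ))) : ℂ)) := by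
      apply intervalIntegral.integral_congr
      intro t _
      dsimp only
      rw [habs t, hprod t]
      rfl
    rw [h1]
    have hIcont : Continuous (fun t : ℝ => ∑ n ∈ S, ∑ m ∈ S, (a n * (starRingEnd ℂ) (a m)) * Complex.exp (Complex.I * ((n : ℂ) - (m : ℂ)) * (ω : ℂ) * (t : ℂ))) := by
      apply continuous_finset_sum; intro n _
      apply continuous_finset_sum; intro m _
      exact hcont n m
    rw [Complex.reCLM.intervalIntegral_comp_comm (hIcont.intervalIntegrable 0 T)]
    have h2 : (∫ t in (0:ℝ)..T, ∑ n ∈ S, ∑ m ∈ S, (a n * (starRingEnd ℂ) (a m)) * Complex.exp (Complex.I * ((n : ℂ) - (m : ℂ)) * (ω : ℂ) * (t : ℂ)))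
        = ∑ n ∈ S, ∑ m ∈ S, ∫ t in (0:ℝ)..T, (a n * (starRingEnd ℂ) (a m)) * Complex.exp (Complex.I * ((n : ℂ) - (m : ℂ)) * (ω : ℂ) * (t : ℂ)) := by
      rw [intervalIntegral.integral_finset_sum]
      · apply Finset.sum_congr rfl; intro n _
        rw [intervalIntegral.integral_finset_sum]
        intro m _
        exact (hcont n m).intervalIntegrable 0 T
      · intro n hn
        exact ((continuous_finset_sum S fun m _ => hcont n m).intervalIntegrable 0 T)
    rw [h2, Complex.reCLM_apply]
    congr 1
    apply Finset.sum_congr rfl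
    intro n hn
    rw [Finset.sum_congr rfl (fun m hm => hterm n hn m hm)]
    rw [Finset.sum_ite_eq' S n (fun _ => a n * (starRingEnd ℂ) (a n) * (T : ℂ))]
    simp [hn]
  rw [hint]
  -- final algebra
  rw [show (∑ n ∈ S, a n * (starRingEnd ℂ) (a n) * (T : ℂ)) = ((∑ n ∈ S, Complex.normSq (a n) * T : ℝ) : ℂ) by
    push_cast
    apply Finset.sum_congr rfl
    intro n _
    rw [show a n * (starRingEnd ℂ) (a n) = ((Complex.normSq (a n) : ℝ) : ℂ) from Complex.mul_conj (a n)]]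
  rw [Complex.ofReal_re]
  rw [Finset.mul_sum, Finset.mul_sum]
  apply Finset.sum_congr rfl
  intro n _
  have hnormsq : Complex.normSq (a n) = ‖(n:ℂ) * c n‖^2 * (4 * Real.pi^2 / L^2) := by
    rw [ha]
    simp only [← Complex.sq_norm, norm_mul]
    rw [show (2 * (n : ℂ) * (Real.pi : ℂ) * Complex.I / (L : ℂ)) = ((n:ℂ)) * (2 * (Real.pi : ℂ) * Complex.I / (L : ℂ)) by ring]
    rw [norm_mul, norm_div, norm_mul, norm_mul]
    simp [Complex.norm_real, _root_.abs_of_pos hL, _root_.abs_of_nonneg Real.pi_pos.le]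
    ring
  rw [hnormsq, hT]
  field_simp
end

section
/- Two-endpoint observability identity for finite series: with φ(x,t) = Σ_{n∈S} c_n (exp(nπi(1-v)(t+x)/L) − exp(nπi(1+v)(t-x)/L)) over a finite set S of nonzero integers, one has ∫_0^{L/(1+v)} |∂ₓφ(vt,t)|² dt + ∫_0^{L/(1-v)} |∂ₓφ(L+vt,t)|² dt = (8π²/(L(1-v²)))·Σ_{n∈S} |n c_n|². -/
open MeasureTheory Complex Real

-- generic expansion of |∑ d n e^{w n t}|² integral
lemma aux_expand (T : ℝ) (S : Finset ℤ) (d : ℤ → ℂ) (w : ℤ → ℂ)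
    (hw : ∀ n, (starRingEnd ℂ) (w n) = - w n) :
    (∫ t in (0:ℝ)..T, (‖∑ n ∈ S, d n * Complex.exp (w n * t)‖) ^ 2)
    = (∑ n ∈ S, ∑ m ∈ S, d n * (starRingEnd ℂ) (d m) *
        ∫ t in (0:ℝ)..T, Complex.exp ((w n - w m) * t)).re := by
  have hptw : ∀ t : ℝ, ((∑ n ∈ S, d n * Complex.exp (w n * t)) *
      (starRingEnd ℂ) (∑ n ∈ S, d n * Complex.exp (w n * t)))
      = ∑ n ∈ S, ∑ m ∈ S, d n * (starRingEnd ℂ) (d m) * Complex.exp ((w n - w m) * t) := by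
    intro t
    rw [map_sum, Finset.sum_mul_sum]
    refine Finset.sum_congr rfl fun n _ => Finset.sum_congr rfl fun m _ => ?_
    rw [map_mul, ← Complex.exp_conj, map_mul, hw m, Complex.conj_ofReal]
    rw [show (d n * Complex.exp (w n * t)) * ((starRingEnd ℂ) (d m) * Complex.exp (-w m * t))
        = d n * (starRingEnd ℂ) (d m) * (Complex.exp (w n * t) * Complex.exp (-w m * t)) by ring,
      ← Complex.exp_add]
    ring_nf
  have hcont : ∀ n m : ℤ, Continuous fun t : ℝ =>
      d n * (starRingEnd ℂ) (d m) * Complex.exp ((w n - w m) * t) := by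
    intro n m
    exact continuous_const.mul (Complex.continuous_exp.comp (continuous_const.mul Complex.continuous_ofReal))
  have h2 : (∫ t in (0:ℝ)..T, (∑ n ∈ S, d n * Complex.exp (w n * t)) *
      (starRingEnd ℂ) (∑ n ∈ S, d n * Complex.exp (w n * t)))
      = ∑ n ∈ S, ∑ m ∈ S, d n * (starRingEnd ℂ) (d m) *
        ∫ t in (0:ℝ)..T, Complex.exp ((w n - w m) * t) := by
    rw [intervalIntegral.integral_congr (g := fun t => ∑ n ∈ S, ∑ m ∈ S,
        d n * (starRingEnd ℂ) (d m) * Complex.exp ((w n - w m) * t)) (fun t _ => hptw t)]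
    rw [intervalIntegral.integral_finset_sum (fun n _ => (continuous_finset_sum _ fun m _ => hcont n m).intervalIntegrable _ _)]
    refine Finset.sum_congr rfl fun n _ => ?_
    rw [intervalIntegral.integral_finset_sum (fun m _ => (hcont n m).intervalIntegrable _ _)]
    exact Finset.sum_congr rfl fun m _ => intervalIntegral.integral_const_mul _ _
  rw [← h2]
  have h3 : (∫ t in (0:ℝ)..T, (∑ n ∈ S, d n * Complex.exp (w n * t)) *
      (starRingEnd ℂ) (∑ n ∈ S, d n * Complex.exp (w n * t)))
      = ((∫ t in (0:ℝ)..T, (‖∑ n ∈ S, d n * Complex.exp (w n * t)‖) ^ 2 : ℝ) : ℂ) := by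
    rw [← intervalIntegral.integral_ofReal]
    refine intervalIntegral.integral_congr fun t _ => ?_
    rw [Complex.mul_conj]
    norm_cast
    exact (Complex.sq_norm _).symm
  rw [h3, Complex.ofReal_re]

lemma core (L v : ℝ) (hL : 0 < L) (hv0 : 0 < v) (hv1 : v < 1)
    (S : Finset ℤ) (a : ℤ → ℂ) :
    (∫ t in (0:ℝ)..(L/(1+v)), (‖∑ n ∈ S, a n *
        Complex.exp ((n:ℂ)*(Real.pi:ℂ)*Complex.I*(1-(v:ℂ)^2)/(L:ℂ) * t)‖) ^ 2)
    + (∫ t in (0:ℝ)..(L/(1-v)), (‖∑ n ∈ S, (a n *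
        (Complex.exp ((n:ℂ)*(Real.pi:ℂ)*Complex.I) * Complex.exp (-((n:ℂ)*(Real.pi:ℂ)*Complex.I*(v:ℂ))))) *
        Complex.exp ((n:ℂ)*(Real.pi:ℂ)*Complex.I*(1-(v:ℂ)^2)/(L:ℂ) * t)‖) ^ 2)
    = (L/(1+v) + L/(1-v)) * ∑ n ∈ S, (‖a n‖) ^ 2 := by
  have hLne : (L:ℂ) ≠ 0 := Complex.ofReal_ne_zero.mpr hL.ne'
  have h1p : ((1:ℂ)+v) ≠ 0 := by
    have : (0:ℝ) < 1 + v := by linarith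
    exact_mod_cast Complex.ofReal_ne_zero.mpr this.ne'
  have h1m : ((1:ℂ)-v) ≠ 0 := by
    intro h
    apply Complex.ofReal_ne_zero.mpr (by linarith : (1 - v : ℝ) ≠ 0)
    push_cast
    exact h
  set w : ℤ → ℂ := fun n => (n:ℂ)*(Real.pi:ℂ)*Complex.I*(1-(v:ℂ)^2)/(L:ℂ) with hwdef
  set μ : ℤ → ℂ := fun n => Complex.exp ((n:ℂ)*(Real.pi:ℂ)*Complex.I) *
      Complex.exp (-((n:ℂ)*(Real.pi:ℂ)*Complex.I*(v:ℂ))) with hμdef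
  have hw : ∀ n, (starRingEnd ℂ) (w n) = - w n := by
    intro n
    simp only [hwdef, map_div₀, map_mul, map_sub, map_one, map_pow, map_intCast,
      Complex.conj_ofReal, Complex.conj_I]
    ring
  have hconjμ : ∀ m, (starRingEnd ℂ) (μ m) =
      Complex.exp (-((m:ℂ)*(Real.pi:ℂ)*Complex.I)) * Complex.exp ((m:ℂ)*(Real.pi:ℂ)*Complex.I*(v:ℂ)) := by
    intro m
    simp only [hμdef, map_mul, ← Complex.exp_conj, map_neg, map_intCast, Complex.conj_ofReal,
      Complex.conj_I]
    ring_nf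
  rw [aux_expand _ S a w hw, aux_expand _ S (fun n => a n * μ n) w hw, ← Complex.add_re]
  have key : (∑ n ∈ S, ∑ m ∈ S, a n * (starRingEnd ℂ) (a m) *
        ∫ t in (0:ℝ)..(L/(1+v)), Complex.exp ((w n - w m) * t))
      + (∑ n ∈ S, ∑ m ∈ S, (a n * μ n) * (starRingEnd ℂ) (a m * μ m) *
        ∫ t in (0:ℝ)..(L/(1-v)), Complex.exp ((w n - w m) * t))
      = (((L/(1+v) + L/(1-v)) * ∑ n ∈ S, (‖a n‖) ^ 2 : ℝ) : ℂ) := by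
    rw [← Finset.sum_add_distrib]
    have hstep : ∀ n ∈ S,
        (∑ m ∈ S, a n * (starRingEnd ℂ) (a m) *
          ∫ t in (0:ℝ)..(L/(1+v)), Complex.exp ((w n - w m) * t))
        + (∑ m ∈ S, (a n * μ n) * (starRingEnd ℂ) (a m * μ m) *
          ∫ t in (0:ℝ)..(L/(1-v)), Complex.exp ((w n - w m) * t))
        = (((L/(1+v) + L/(1-v)) * (‖a n‖) ^ 2 : ℝ) : ℂ) := by
      intro n hn
      rw [← Finset.sum_add_distrib]
      rw [Finset.sum_eq_single_of_mem n hn]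
      · -- diagonal value
        have hzero : w n - w n = 0 := sub_self _
        rw [hzero]
        have hint : ∀ T : ℝ, (∫ t in (0:ℝ)..T, Complex.exp ((0:ℂ) * t)) = (T:ℂ) := by
          intro T; simp
        rw [hint, hint]
        have hμ1 : μ n * (starRingEnd ℂ) (μ n) = 1 := by
          rw [hconjμ, hμdef]
          simp only
          rw [← Complex.exp_add, ← Complex.exp_add, ← Complex.exp_add]
          rw [show ((n:ℂ)*(Real.pi:ℂ)*Complex.I + -((n:ℂ)*(Real.pi:ℂ)*Complex.I*(v:ℂ)) +
            (-((n:ℂ)*(Real.pi:ℂ)*Complex.I) + (n:ℂ)*(Real.pi:ℂ)*Complex.I*(v:ℂ)) : ℂ) = 0 by ring,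
            Complex.exp_zero]
        have habs : a n * (starRingEnd ℂ) (a n) = ((‖a n‖)^2 : ℝ) := by
          rw [Complex.mul_conj]; norm_cast; exact (Complex.sq_norm _).symm
        rw [show a n * μ n * (starRingEnd ℂ) (a n * μ n) * ((L / (1 - v) : ℝ) : ℂ)
            = μ n * (starRingEnd ℂ) (μ n) * (a n * (starRingEnd ℂ) (a n)) * ((L / (1 - v) : ℝ) : ℂ) from by
              rw [map_mul]; ring,
          hμ1, habs, one_mul]
        push_cast
        ring
      · -- off-diagonal zero
        intro m _ hmn
        have hkne : ((n:ℂ) - (m:ℂ)) ≠ 0 := by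
          rw [sub_ne_zero]
          exact_mod_cast Ne.symm hmn
        have hcne : w n - w m ≠ 0 := by
          rw [hwdef]
          simp only
          rw [div_sub_div_same]
          apply div_ne_zero _ hLne
          rw [show ((n:ℂ)*(Real.pi:ℂ)*Complex.I*(1-(v:ℂ)^2) - (m:ℂ)*(Real.pi:ℂ)*Complex.I*(1-(v:ℂ)^2) : ℂ)
            = ((n:ℂ)-(m:ℂ)) * ((Real.pi:ℂ)*(Complex.I*(1-(v:ℂ)^2))) by ring]
          refine mul_ne_zero hkne (mul_ne_zero ?_ (mul_ne_zero Complex.I_ne_zero ?_))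
          · exact_mod_cast Complex.ofReal_ne_zero.mpr Real.pi_ne_zero
          · rw [show ((1:ℂ)-(v:ℂ)^2) = ((1:ℂ)-v)*((1:ℂ)+v) by ring]
            exact mul_ne_zero h1m h1p
        set k : ℂ := (n:ℂ) - (m:ℂ) with hk
        set P : ℂ := Complex.exp (k*(Real.pi:ℂ)*Complex.I) with hP
        set N : ℂ := Complex.exp (-(k*(Real.pi:ℂ)*Complex.I*(v:ℂ))) with hN
        set N' : ℂ := Complex.exp (k*(Real.pi:ℂ)*Complex.I*(v:ℂ)) with hN'
        have hi1 : (∫ t in (0:ℝ)..(L/(1+v)), Complex.exp ((w n - w m) * t)) = (P * N - 1) / (w n - w m) := by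
          rw [integral_exp_mul_complex hcne]
          congr 1
          rw [show ((w n - w m) * ((0:ℝ):ℂ)) = 0 by push_cast; ring, Complex.exp_zero]
          congr 1
          rw [hP, hN, ← Complex.exp_add]
          congr 1
          rw [hwdef, hk]
          simp only
          push_cast
          field_simp
          ring
        have hi2 : (∫ t in (0:ℝ)..(L/(1-v)), Complex.exp ((w n - w m) * t)) = (P * N' - 1) / (w n - w m) := by
          rw [integral_exp_mul_complex hcne]
          congr 1
          rw [show ((w n - w m) * ((0:ℝ):ℂ)) = 0 by push_cast; ring, Complex.exp_zero]
          congr 1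
          rw [hP, hN', ← Complex.exp_add]
          congr 1
          rw [hwdef, hk]
          simp only
          push_cast
          field_simp
          ring
        have hμprod : μ n * (starRingEnd ℂ) (μ m) = P * N := by
          rw [hconjμ, hμdef]
          simp only
          rw [hP, hN, ← Complex.exp_add, ← Complex.exp_add, ← Complex.exp_add, ← Complex.exp_add]
          congr 1
          rw [hk]
          ring
        have hP2 : P * P = 1 := by
          rw [hP, ← Complex.exp_add,
            show (k*(Real.pi:ℂ)*Complex.I + k*(Real.pi:ℂ)*Complex.I : ℂ)
              = ((n - m : ℤ):ℂ) * (2*(Real.pi:ℂ)*Complex.I) by rw [hk]; push_cast; ring,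
            Complex.exp_int_mul_two_pi_mul_I]
        have hNN : N * N' = 1 := by
          rw [hN, hN', ← Complex.exp_add]
          rw [show (-(k*(Real.pi:ℂ)*Complex.I*(v:ℂ)) + k*(Real.pi:ℂ)*Complex.I*(v:ℂ) : ℂ) = 0 by ring,
            Complex.exp_zero]
        have hbr : (P * N - 1) / (w n - w m) + (P * N) * ((P * N' - 1) / (w n - w m)) = 0 := by
          have hnum : (P * N - 1) + P * N * (P * N' - 1) = 0 := by
            linear_combination (N * N') * hP2 + hNN
          rw [show (P * N - 1) / (w n - w m) + (P * N) * ((P * N' - 1) / (w n - w m))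
            = ((P * N - 1) + P * N * (P * N' - 1)) / (w n - w m) by ring, hnum, zero_div]
        rw [hi1, hi2]
        calc a n * (starRingEnd ℂ) (a m) * ((P * N - 1) / (w n - w m))
              + a n * μ n * (starRingEnd ℂ) (a m * μ m) * ((P * N' - 1) / (w n - w m))
            = a n * (starRingEnd ℂ) (a m) * ((P * N - 1) / (w n - w m)
                + (μ n * (starRingEnd ℂ) (μ m)) * ((P * N' - 1) / (w n - w m))) := by
              rw [map_mul]; ring
          _ = 0 := by rw [hμprod, hbr, mul_zero]
    rw [Finset.sum_congr rfl hstep]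
    push_cast
    rw [Finset.mul_sum]
  rw [key, Complex.ofReal_re]


lemma aux_deriv (L v : ℝ) (c : ℤ → ℂ) (S : Finset ℤ) (t x : ℝ) :
    deriv (fun y : ℝ => ∑ n ∈ S, c n *
      (Complex.exp ((n : ℂ) * (Real.pi : ℂ) * Complex.I * ((1 : ℂ) - (v : ℂ)) * ((t : ℂ) + (y : ℂ)) / (L : ℂ))
        - Complex.exp ((n : ℂ) * (Real.pi : ℂ) * Complex.I * ((1 : ℂ) + (v : ℂ)) * ((t : ℂ) - (y : ℂ)) / (L : ℂ)))) x
    = ∑ n ∈ S, c n *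
      (((n : ℂ) * (Real.pi : ℂ) * Complex.I * ((1 : ℂ) - (v : ℂ)) / L) *
          Complex.exp ((n : ℂ) * (Real.pi : ℂ) * Complex.I * ((1 : ℂ) - (v : ℂ)) * ((t : ℂ) + (x : ℂ)) / (L : ℂ))
        + ((n : ℂ) * (Real.pi : ℂ) * Complex.I * ((1 : ℂ) + (v : ℂ)) / L) *
          Complex.exp ((n : ℂ) * (Real.pi : ℂ) * Complex.I * ((1 : ℂ) + (v : ℂ)) * ((t : ℂ) - (x : ℂ)) / (L : ℂ))) := by
  apply HasDerivAt.deriv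
  apply HasDerivAt.fun_sum
  intro n _
  have h1 : HasDerivAt (fun z : ℂ => Complex.exp ((n : ℂ) * (Real.pi : ℂ) * Complex.I * ((1 : ℂ) - (v : ℂ)) * ((t : ℂ) + z) / (L : ℂ)))
      (Complex.exp ((n : ℂ) * (Real.pi : ℂ) * Complex.I * ((1 : ℂ) - (v : ℂ)) * ((t : ℂ) + (x : ℂ)) / (L : ℂ)) *
        ((n : ℂ) * (Real.pi : ℂ) * Complex.I * ((1 : ℂ) - (v : ℂ)) * 1 / L)) (x : ℂ) :=
    ((((hasDerivAt_id _).const_add ((t : ℂ))).const_mul ((n : ℂ) * (Real.pi : ℂ) * Complex.I * ((1 : ℂ) - (v : ℂ)))).div_const _).cexp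
  have h2 : HasDerivAt (fun z : ℂ => Complex.exp ((n : ℂ) * (Real.pi : ℂ) * Complex.I * ((1 : ℂ) + (v : ℂ)) * ((t : ℂ) - z) / (L : ℂ)))
      (Complex.exp ((n : ℂ) * (Real.pi : ℂ) * Complex.I * ((1 : ℂ) + (v : ℂ)) * ((t : ℂ) - (x : ℂ)) / (L : ℂ)) *
        ((n : ℂ) * (Real.pi : ℂ) * Complex.I * ((1 : ℂ) + (v : ℂ)) * (-1) / L)) (x : ℂ) :=
    ((((hasDerivAt_id _).const_sub ((t : ℂ))).const_mul ((n : ℂ) * (Real.pi : ℂ) * Complex.I * ((1 : ℂ) + (v : ℂ)))).div_const _).cexp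
  have h3 := ((h1.sub h2).const_mul (c n)).comp_ofReal
  exact h3.congr_deriv (by ring)


theorem stmt15 (L v : ℝ) (hL : 0 < L) (hv0 : 0 < v) (hv1 : v < 1)
    (S : Finset ℤ) (hS : ∀ n ∈ S, n ≠ 0) (c : ℤ → ℂ) (φ : ℝ → ℝ → ℂ)
    (hφ : ∀ x t : ℝ, φ x t = ∑ n ∈ S, c n * (Complex.exp ((n : ℂ) * (Real.pi : ℂ) * Complex.I * ((1 : ℂ) - (v : ℂ)) * ((t : ℂ) + (x : ℂ)) / (L : ℂ)) - Complex.exp ((n : ℂ) * (Real.pi : ℂ) * Complex.I * ((1 : ℂ) + (v : ℂ)) * ((t : ℂ) - (x : ℂ)) / (L : ℂ)))) :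
    (∫ t in (0 : ℝ)..(L / (1 + v)), ‖deriv (fun y => φ y t) (v * t)‖ ^ 2)
      + (∫ t in (0 : ℝ)..(L / (1 - v)), ‖deriv (fun y => φ y t) (L + v * t)‖ ^ 2)
      = (8 * Real.pi ^ 2 / (L * (1 - v ^ 2))) * ∑ n ∈ S, ‖(n : ℂ) * c n‖ ^ 2 := by
  have hLne : (L:ℂ) ≠ 0 := Complex.ofReal_ne_zero.mpr hL.ne'
  have h1pR : (1 + v : ℝ) ≠ 0 := by positivity
  have h1mR : (1 - v : ℝ) ≠ 0 := by intro h; linarith [h]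
  have hderiv : ∀ t x : ℝ, deriv (fun y => φ y t) x = ∑ n ∈ S, c n *
      (((n : ℂ) * (Real.pi : ℂ) * Complex.I * ((1 : ℂ) - (v : ℂ)) / L) *
          Complex.exp ((n : ℂ) * (Real.pi : ℂ) * Complex.I * ((1 : ℂ) - (v : ℂ)) * ((t : ℂ) + (x : ℂ)) / (L : ℂ))
        + ((n : ℂ) * (Real.pi : ℂ) * Complex.I * ((1 : ℂ) + (v : ℂ)) / L) *
          Complex.exp ((n : ℂ) * (Real.pi : ℂ) * Complex.I * ((1 : ℂ) + (v : ℂ)) * ((t : ℂ) - (x : ℂ)) / (L : ℂ))) := by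
    intro t x
    rw [show (fun y => φ y t) = (fun y : ℝ => ∑ n ∈ S, c n *
      (Complex.exp ((n : ℂ) * (Real.pi : ℂ) * Complex.I * ((1 : ℂ) - (v : ℂ)) * ((t : ℂ) + (y : ℂ)) / (L : ℂ))
        - Complex.exp ((n : ℂ) * (Real.pi : ℂ) * Complex.I * ((1 : ℂ) + (v : ℂ)) * ((t : ℂ) - (y : ℂ)) / (L : ℂ))))
      from funext fun y => hφ y t]
    exact aux_deriv L v c S t x
  have hd1 : ∀ t : ℝ, deriv (fun y => φ y t) (v * t)
      = ∑ n ∈ S, (2*(Real.pi:ℂ)*Complex.I/(L:ℂ) * ((n:ℂ) * c n)) *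
          Complex.exp ((n:ℂ)*(Real.pi:ℂ)*Complex.I*(1-(v:ℂ)^2)/(L:ℂ) * t) := by
    intro t
    rw [hderiv t (v * t)]
    refine Finset.sum_congr rfl fun n _ => ?_
    rw [show (n : ℂ) * (Real.pi : ℂ) * Complex.I * ((1 : ℂ) - (v : ℂ)) * ((t : ℂ) + ((v*t : ℝ) : ℂ)) / (L : ℂ)
        = (n:ℂ)*(Real.pi:ℂ)*Complex.I*(1-(v:ℂ)^2)/(L:ℂ) * t from by push_cast; ring,
      show (n : ℂ) * (Real.pi : ℂ) * Complex.I * ((1 : ℂ) + (v : ℂ)) * ((t : ℂ) - ((v*t : ℝ) : ℂ)) / (L : ℂ)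
        = (n:ℂ)*(Real.pi:ℂ)*Complex.I*(1-(v:ℂ)^2)/(L:ℂ) * t from by push_cast; ring]
    ring
  have hd2 : ∀ t : ℝ, deriv (fun y => φ y t) (L + v * t)
      = ∑ n ∈ S, ((2*(Real.pi:ℂ)*Complex.I/(L:ℂ) * ((n:ℂ) * c n)) *
          (Complex.exp ((n:ℂ)*(Real.pi:ℂ)*Complex.I) * Complex.exp (-((n:ℂ)*(Real.pi:ℂ)*Complex.I*(v:ℂ))))) *
          Complex.exp ((n:ℂ)*(Real.pi:ℂ)*Complex.I*(1-(v:ℂ)^2)/(L:ℂ) * t) := by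
    intro t
    rw [hderiv t (L + v * t)]
    refine Finset.sum_congr rfl fun n _ => ?_
    have hPn : Complex.exp (-((n:ℂ)*(Real.pi:ℂ)*Complex.I)) = Complex.exp ((n:ℂ)*(Real.pi:ℂ)*Complex.I) := by
      have h2 : Complex.exp ((n:ℂ)*(Real.pi:ℂ)*Complex.I) * Complex.exp ((n:ℂ)*(Real.pi:ℂ)*Complex.I) = 1 := by
        rw [← Complex.exp_add,
          show ((n:ℂ)*(Real.pi:ℂ)*Complex.I + (n:ℂ)*(Real.pi:ℂ)*Complex.I : ℂ)
            = ((n : ℤ):ℂ) * (2*(Real.pi:ℂ)*Complex.I) by push_cast; ring,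
          Complex.exp_int_mul_two_pi_mul_I]
      rw [Complex.exp_neg, inv_eq_of_mul_eq_one_right h2]
    rw [show (n : ℂ) * (Real.pi : ℂ) * Complex.I * ((1 : ℂ) - (v : ℂ)) * ((t : ℂ) + ((L + v*t : ℝ) : ℂ)) / (L : ℂ)
        = (n:ℂ)*(Real.pi:ℂ)*Complex.I*(1-(v:ℂ)^2)/(L:ℂ) * t + ((n:ℂ)*(Real.pi:ℂ)*Complex.I + -((n:ℂ)*(Real.pi:ℂ)*Complex.I*(v:ℂ))) from by
          push_cast; field_simp; ring,
      show (n : ℂ) * (Real.pi : ℂ) * Complex.I * ((1 : ℂ) + (v : ℂ)) * ((t : ℂ) - ((L + v*t : ℝ) : ℂ)) / (L : ℂ)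
        = (n:ℂ)*(Real.pi:ℂ)*Complex.I*(1-(v:ℂ)^2)/(L:ℂ) * t + (-((n:ℂ)*(Real.pi:ℂ)*Complex.I) + -((n:ℂ)*(Real.pi:ℂ)*Complex.I*(v:ℂ))) from by
          push_cast; field_simp; ring,
      Complex.exp_add, Complex.exp_add, Complex.exp_add, Complex.exp_add, hPn]
    ring
  have key : (∫ t in (0:ℝ)..(L/(1+v)), (‖∑ n ∈ S, (2*(Real.pi:ℂ)*Complex.I/(L:ℂ) * ((n:ℂ) * c n)) *
        Complex.exp ((n:ℂ)*(Real.pi:ℂ)*Complex.I*(1-(v:ℂ)^2)/(L:ℂ) * t)‖) ^ 2)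
      + (∫ t in (0:ℝ)..(L/(1-v)), (‖∑ n ∈ S, ((2*(Real.pi:ℂ)*Complex.I/(L:ℂ) * ((n:ℂ) * c n)) *
        (Complex.exp ((n:ℂ)*(Real.pi:ℂ)*Complex.I) * Complex.exp (-((n:ℂ)*(Real.pi:ℂ)*Complex.I*(v:ℂ))))) *
        Complex.exp ((n:ℂ)*(Real.pi:ℂ)*Complex.I*(1-(v:ℂ)^2)/(L:ℂ) * t)‖) ^ 2)
      = (L/(1+v) + L/(1-v)) * ∑ n ∈ S, (‖2*(Real.pi:ℂ)*Complex.I/(L:ℂ) * ((n:ℂ) * c n)‖) ^ 2 :=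
    core L v hL hv0 hv1 S _
  rw [intervalIntegral.integral_congr (fun t _ => by simp only [hd1 t] :
        Set.EqOn (fun t : ℝ => (‖deriv (fun y => φ y t) (v * t)‖) ^ 2)
          (fun t : ℝ => (‖∑ n ∈ S, (2*(Real.pi:ℂ)*Complex.I/(L:ℂ) * ((n:ℂ) * c n)) *
            Complex.exp ((n:ℂ)*(Real.pi:ℂ)*Complex.I*(1-(v:ℂ)^2)/(L:ℂ) * t)‖) ^ 2) _),
      intervalIntegral.integral_congr (fun t _ => by simp only [hd2 t] :
        Set.EqOn (fun t : ℝ => (‖deriv (fun y => φ y t) (L + v * t)‖) ^ 2)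
          (fun t : ℝ => (‖∑ n ∈ S, ((2*(Real.pi:ℂ)*Complex.I/(L:ℂ) * ((n:ℂ) * c n)) *
            (Complex.exp ((n:ℂ)*(Real.pi:ℂ)*Complex.I) * Complex.exp (-((n:ℂ)*(Real.pi:ℂ)*Complex.I*(v:ℂ))))) *
            Complex.exp ((n:ℂ)*(Real.pi:ℂ)*Complex.I*(1-(v:ℂ)^2)/(L:ℂ) * t)‖) ^ 2) _),
      key]
  have habs : ∀ n : ℤ, (‖2*(Real.pi:ℂ)*Complex.I/(L:ℂ) * ((n:ℂ) * c n)‖) ^ 2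
      = (2*Real.pi/L)^2 * (‖(n:ℂ) * c n‖) ^ 2 := by
    intro n
    rw [norm_mul, mul_pow]
    congr 2
    rw [norm_div, norm_mul, Complex.norm_I, mul_one, norm_mul, Complex.norm_of_nonneg Real.pi_pos.le,
      Complex.norm_of_nonneg hL.le]
    norm_num
  rw [Finset.sum_congr rfl fun n _ => habs n, ← Finset.mul_sum, ← mul_assoc]
  congr 1
  have h2 : (1 - v^2 : ℝ) ≠ 0 := by
    intro h
    have : (1 - v) * (1 + v) = 0 := by linarith [h]
    rcases mul_eq_zero.mp this with h' | h' <;> [exact h1mR h'; exact h1pR h']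
  field_simp
  ring
end
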